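/- arXiv:1910.08736 — 2 statements merged into one kernel-verified Lean document; each statement's English description precedes it below -/
import Mathlib

section
/- Let f : ℕ × ℕ → ℝ satisfy f(k,ℓ) = f(k+1,ℓ−1) + f(k,ℓ−1) for all ℓ ≥ 1. Then the sum F(S) = Σ_{k≥3} Σ_{ℓ≥0} f(k,ℓ)·X_{k,ℓ}(S) takes the same value for all sets S of n points in general position in the plane; i.e., F(S) depends only on n. -/
open Finset
open scoped Classical

def GenPos (S : Finset (ℝ × ℝ)) : Prop :=
  ∀ T ⊆ S, T.card = 3 → ¬ Collinear ℝ (T : Set (ℝ × ℝ))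

def ConvexPos (T : Finset (ℝ × ℝ)) : Prop :=
  ∀ p ∈ T, p ∉ convexHull ℝ ((T : Set (ℝ × ℝ)) \ {p})

/-- number of convex k-gons with vertices in S and exactly l points of S inside -/
noncomputable def X (S : Finset (ℝ × ℝ)) (k l : ℕ) : ℕ :=
  ((Finset.powersetCard k S).filter (fun T => ConvexPos T ∧
    (S.filter (fun p => p ∈ interior (convexHull ℝ (T : Set (ℝ × ℝ))))).card = l)).card

/-- number of extreme points (convex hull vertices) of S -/
noncomputable def hullVerts (S : Finset (ℝ × ℝ)) : ℕ :=
  (S.filter (fun p => p ∉ convexHull ℝ ((S : Set (ℝ × ℝ)) \ {p}))).card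



-- easy direction
lemma vertex_of_extreme {A : Set (ℝ × ℝ)} {p : ℝ × ℝ}
    (h : p ∈ (convexHull ℝ A).extremePoints ℝ) : p ∉ convexHull ℝ (A \ {p}) := by
  have h2 := (convex_convexHull ℝ A).mem_extremePoints_iff_mem_diff_convexHull_diff.1 h
  intro hc
  exact h2.2 (convexHull_mono (Set.diff_subset_diff_left (subset_convexHull ℝ A)) hc)

lemma extreme_of_vertex {A : Set (ℝ × ℝ)} {p : ℝ × ℝ} (hpA : p ∈ A)
    (h : p ∉ convexHull ℝ (A \ {p})) : p ∈ (convexHull ℝ A).extremePoints ℝ := by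
  rw [mem_extremePoints_iff_forall_segment]
  refine ⟨subset_convexHull ℝ A hpA, fun x₁ hx₁ x₂ hx₂ hseg => ?_⟩
  by_contra hne
  push_neg at hne
  obtain ⟨hne₁, hne₂⟩ := hne
  -- A = insert p (A \ {p})
  have hins : insert p (A \ {p}) = A := Set.insert_diff_singleton.trans (Set.insert_eq_self.2 hpA)
  have hsne : (A \ {p}).Nonempty := by
    by_contra hemp
    rw [Set.not_nonempty_iff_eq_empty] at hemp
    have : A ⊆ {p} := by
      intro a ha
      by_contra hap
      exact Set.notMem_empty a (hemp ▸ ⟨ha, hap⟩)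
    have : convexHull ℝ A ⊆ {p} := by
      calc convexHull ℝ A ⊆ convexHull ℝ {p} := convexHull_mono this
      _ = {p} := convexHull_singleton p
    exact hne₁ (this hx₁)
  have hjoin : convexHull ℝ A = convexJoin ℝ {p} (convexHull ℝ (A \ {p})) := by
    conv_lhs => rw [← hins]
    rw [convexHull_insert hsne]
  rw [hjoin, mem_convexJoin] at hx₁ hx₂
  obtain ⟨p₁, hp₁, y₁, hy₁, hxy₁⟩ := hx₁
  obtain ⟨p₂, hp₂, y₂, hy₂, hxy₂⟩ := hx₂
  rw [Set.eq_of_mem_singleton hp₁] at hxy₁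
  rw [Set.eq_of_mem_singleton hp₂] at hxy₂
  obtain ⟨a₁, b₁, ha₁, hb₁, hab₁, hc₁⟩ := hxy₁
  obtain ⟨a₂, b₂, ha₂, hb₂, hab₂, hc₂⟩ := hxy₂
  obtain ⟨t₁, t₂, ht₁, ht₂, htt, htc⟩ := hseg
  -- b₁ ≠ 0 since x₁ ≠ p
  have hb₁' : b₁ ≠ 0 := by
    rintro rfl
    have : a₁ = 1 := by linarith
    subst this
    simp at hc₁
    exact hne₁ hc₁.symm
  have hb₂' : b₂ ≠ 0 := by
    rintro rfl
    have : a₂ = 1 := by linarith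
    subst this
    simp at hc₂
    exact hne₂ hc₂.symm
  set c := t₁ * b₁ with hc
  set d := t₂ * b₂ with hd
  have hc0 : 0 ≤ c := mul_nonneg ht₁ hb₁
  have hd0 : 0 ≤ d := mul_nonneg ht₂ hb₂
  clear_value c d
  have hcd : 0 < c + d := by
    rcases lt_or_eq_of_le (mul_nonneg ht₁ hb₁) with h1 | h1
    · nlinarith [mul_nonneg ht₂ hb₂]
    · rcases lt_or_eq_of_le (mul_nonneg ht₂ hb₂) with h2 | h2
      · nlinarith
      · exfalso
        have ht₁0 : t₁ = 0 := by
          rcases mul_eq_zero.1 h1.symm with h | h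
          · exact h
          · exact absurd h hb₁'
        have ht₂0 : t₂ = 0 := by
          rcases mul_eq_zero.1 h2.symm with h | h
          · exact h
          · exact absurd h hb₂'
        rw [ht₁0, ht₂0] at htt; norm_num at htt
  have key : (c + d) • p = c • y₁ + d • y₂ := by
    have e3 : t₁ • (a₁ • p + b₁ • y₁) + t₂ • (a₂ • p + b₂ • y₂) = p := by
      rw [hc₁, hc₂]; exact htc
    have ht : t₁ * a₁ + t₂ * a₂ = 1 - (c + d) := by
      rw [hc, hd]; nlinarith
    linear_combination (norm := module) (-1 : ℝ) • e3 + ht • p - hc • y₁ - hd • y₂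
  have : p ∈ segment ℝ y₁ y₂ := by
    refine ⟨c / (c + d), d / (c + d), div_nonneg hc0 hcd.le, div_nonneg hd0 hcd.le,
      by rw [← add_div, div_self hcd.ne'], ?_⟩
    rw [div_eq_inv_mul, div_eq_inv_mul, mul_smul, mul_smul, ← smul_add, ← key,
      smul_smul, inv_mul_cancel₀ hcd.ne', one_smul]
  exact h ((convex_convexHull ℝ (A \ {p})).segment_subset hy₁ hy₂ this)

noncomputable def vertsF (A : Finset (ℝ × ℝ)) : Finset (ℝ × ℝ) :=
  A.filter (fun p => p ∉ convexHull ℝ ((A : Set (ℝ × ℝ)) \ {p}))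

lemma vertsF_subset (A : Finset (ℝ × ℝ)) : vertsF A ⊆ A := filter_subset _ _

lemma extremePoints_convexHull_finset (A : Finset (ℝ × ℝ)) :
    (convexHull ℝ (A : Set (ℝ × ℝ))).extremePoints ℝ = ↑(vertsF A) := by
  ext p
  simp only [vertsF, coe_filter, Set.mem_setOf_eq]
  constructor
  · intro h
    exact ⟨extremePoints_convexHull_subset h, vertex_of_extreme h⟩
  · rintro ⟨h1, h2⟩; exact extreme_of_vertex h1 h2

lemma convexHull_vertsF (A : Finset (ℝ × ℝ)) :
    convexHull ℝ ((vertsF A : Set (ℝ × ℝ))) = convexHull ℝ (A : Set (ℝ × ℝ)) := by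
  have hcomp : IsCompact (convexHull ℝ (A : Set (ℝ × ℝ))) := A.finite_toSet.isCompact_convexHull ℝ
  have h := closure_convexHull_extremePoints hcomp (convex_convexHull ℝ _)
  rw [extremePoints_convexHull_finset] at h
  rw [← h, IsClosed.closure_eq ((vertsF A).finite_toSet.isClosed_convexHull ℝ)]

lemma convexPos_vertsF (A : Finset (ℝ × ℝ)) : ConvexPos (vertsF A) := by
  intro p hp
  have h2 := (Finset.mem_filter.1 hp).2
  intro hc
  exact h2 (convexHull_mono (Set.diff_subset_diff_left (by exact_mod_cast coe_subset.2 (vertsF_subset A))) hc)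

lemma extreme_not_interior {A : Finset (ℝ × ℝ)} {p q : ℝ × ℝ}
    (hq : q ∈ convexHull ℝ (A : Set (ℝ × ℝ))) (hqp : q ≠ p)
    (hp : p ∈ (convexHull ℝ (A : Set (ℝ × ℝ))).extremePoints ℝ) :
    p ∉ interior (convexHull ℝ (A : Set (ℝ × ℝ))) := by
  intro hint
  obtain ⟨ε, hε, hball⟩ := Metric.isOpen_iff.1 isOpen_interior p hint
  have hpq : (0:ℝ) < ‖p - q‖ := by
    rw [norm_pos_iff]
    exact sub_ne_zero.2 (Ne.symm hqp)
  set δ := ε / (2 * ‖p - q‖) with hδdef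
  have hδ : 0 < δ := by positivity
  have hr : p + δ • (p - q) ∈ convexHull ℝ (A : Set (ℝ × ℝ)) := by
    apply interior_subset
    apply hball
    rw [Metric.mem_ball, dist_eq_norm, add_sub_cancel_left, norm_smul,
      Real.norm_eq_abs, abs_of_pos hδ, hδdef]
    have h2 : ε / (2 * ‖p - q‖) * ‖p - q‖ = ε / 2 := by field_simp
    rw [h2]; linarith
  clear_value δ
  have hne : (0:ℝ) < 1 + δ := by linarith
  have key : ((1:ℝ) + δ) • p = (p + δ • (p - q)) + δ • q := by module
  have hkey2 : p = ((1:ℝ)+δ)⁻¹ • ((p + δ • (p - q)) + δ • q) := by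
    rw [← key, smul_smul, inv_mul_cancel₀ hne.ne', one_smul]
  have hseg : p ∈ segment ℝ (p + δ • (p - q)) q := by
    refine ⟨1/(1+δ), δ/(1+δ), by positivity, by positivity,
      by rw [← add_div, div_self hne.ne'], ?_⟩
    have h3 : ((1:ℝ)+δ)⁻¹ * (1+δ) = 1 := inv_mul_cancel₀ hne.ne'
    linear_combination (norm := module) hkey2 + h3 • ((2:ℝ) • p)
  rcases (mem_extremePoints_iff_forall_segment.1 hp).2 _ hr q hq hseg with h | h
  · have : δ • (p - q) = 0 := by
      have := congrArg (fun v => v - p) h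
      simpa [add_sub_cancel_left] using this
    rcases smul_eq_zero.1 this with h' | h'
    · exact hδ.ne' h'
    · exact hqp (sub_eq_zero.1 h').symm
  · exact hqp h

lemma vertex_notin_interior {T : Finset (ℝ × ℝ)} (hT : ConvexPos T) (hcard : 2 ≤ T.card)
    {p : ℝ × ℝ} (hp : p ∈ T) : p ∉ interior (convexHull ℝ (T : Set (ℝ × ℝ))) := by
  obtain ⟨q, hq, hqp⟩ := Finset.exists_mem_ne (lt_of_lt_of_le one_lt_two hcard) p
  exact extreme_not_interior (subset_convexHull ℝ _ hq) hqp (extreme_of_vertex hp (hT p hp))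

lemma finrank_plane : Module.finrank ℝ (ℝ × ℝ) = 2 := by
  simp [Module.finrank_prod]

lemma collinear_of_subset_affineSpan {s t : Set (ℝ × ℝ)}
    (h : s ⊆ (affineSpan ℝ t : Set (ℝ × ℝ))) (ht : Collinear ℝ t) : Collinear ℝ s := by
  rw [collinear_iff_rank_le_one] at ht ⊢
  have hle : vectorSpan ℝ s ≤ (affineSpan ℝ t).direction := by
    rw [vectorSpan_def]
    apply Submodule.span_le.2
    rintro v ⟨a, ha, b, hb, rfl⟩
    exact AffineSubspace.vsub_mem_direction (h ha) (h hb)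
  rw [direction_affineSpan] at hle
  exact le_trans (Submodule.rank_mono hle) ht

lemma collinear_line {f : (ℝ × ℝ) →L[ℝ] ℝ} (hf : ∃ x, f x ≠ 0) (c : ℝ) :
    Collinear ℝ (f ⁻¹' {c}) := by
  rw [collinear_iff_rank_le_one]
  have hle : vectorSpan ℝ (f ⁻¹' {c}) ≤ LinearMap.ker (f : (ℝ × ℝ) →ₗ[ℝ] ℝ) := by
    rw [vectorSpan_def]
    apply Submodule.span_le.2
    rintro v ⟨a, ha, b, hb, rfl⟩
    simp only [Set.mem_preimage, Set.mem_singleton_iff] at ha hb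
    simp [LinearMap.mem_ker, vsub_eq_sub, map_sub, ha, hb]
  have hklt : LinearMap.ker (f : (ℝ × ℝ) →ₗ[ℝ] ℝ) < ⊤ := by
    rw [lt_top_iff_ne_top]
    intro htop
    obtain ⟨x, hx⟩ := hf
    exact hx ((LinearMap.mem_ker).1 (htop ▸ Submodule.mem_top))
  have h2 : Module.finrank ℝ (LinearMap.ker (f : (ℝ × ℝ) →ₗ[ℝ] ℝ)) < 2 := by
    have := Submodule.finrank_lt (s := LinearMap.ker (f : (ℝ × ℝ) →ₗ[ℝ] ℝ)) hklt.ne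
    rwa [finrank_plane] at this
  refine le_trans (Submodule.rank_mono hle) ?_
  rw [← Submodule.finrank_eq_rank]
  exact_mod_cast Nat.lt_succ_iff.1 h2

lemma affineSpan_top_of_genpos {S A : Finset (ℝ × ℝ)} (hS : GenPos S) (hA : A ⊆ S)
    (h3 : 3 ≤ A.card) : affineSpan ℝ (A : Set (ℝ × ℝ)) = ⊤ := by
  have hnc : ¬ Collinear ℝ (A : Set (ℝ × ℝ)) := by
    intro hcol
    obtain ⟨T, hTA, hT3⟩ := Finset.exists_subset_card_eq h3
    exact hS T (hTA.trans hA) hT3 (hcol.subset (by exact_mod_cast coe_subset.2 hTA))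
  by_contra hne
  apply hnc
  have hnonempty : (A : Set (ℝ × ℝ)).Nonempty := by
    rcases A.eq_empty_or_nonempty with rfl | h
    · simp at h3
    · exact_mod_cast h
  have hvs : vectorSpan ℝ (A : Set (ℝ × ℝ)) ≠ ⊤ := by
    intro htop
    exact hne ((AffineSubspace.affineSpan_eq_top_iff_vectorSpan_eq_top_of_nonempty ℝ _ _ hnonempty).2 htop)
  have h2 : Module.finrank ℝ (vectorSpan ℝ (A : Set (ℝ × ℝ))) < 2 := by
    have := Submodule.finrank_lt hvs
    rwa [finrank_plane] at this
  rw [collinear_iff_rank_le_one, ← Submodule.finrank_eq_rank]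
  exact_mod_cast Nat.lt_succ_iff.1 h2

lemma mem_convexHull_face {V : Finset (ℝ × ℝ)} {x : ℝ × ℝ}
    (hx : x ∈ convexHull ℝ (V : Set (ℝ × ℝ))) (f : (ℝ × ℝ) →L[ℝ] ℝ) {c : ℝ}
    (hle : ∀ v ∈ V, f v ≤ c) (heq : f x = c) :
    x ∈ convexHull ℝ ((V.filter fun v => f v = c : Finset (ℝ × ℝ)) : Set (ℝ × ℝ)) := by
  rw [Finset.convexHull_eq] at hx
  obtain ⟨w, hw0, hw1, hcm⟩ := hx
  rw [Finset.centerMass_eq_of_sum_1 _ _ hw1] at hcm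
  simp only [id_eq] at hcm
  have hfx : ∑ v ∈ V, w v * f v = c := by
    have := congrArg f hcm
    rw [map_sum] at this
    simp only [map_smul, smul_eq_mul] at this
    rw [this, heq]
  have hzero : ∀ v ∈ V, w v * (c - f v) = 0 := by
    rw [← Finset.sum_eq_zero_iff_of_nonneg
      (fun v hv => mul_nonneg (hw0 v hv) (sub_nonneg.2 (hle v hv)))]
    simp only [mul_sub]
    rw [Finset.sum_sub_distrib, ← Finset.sum_mul, hw1, hfx]
    ring
  have hkey : ∀ v ∈ V, w v ≠ 0 → f v = c := by
    intro v hv hwv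
    have := hzero v hv
    rcases mul_eq_zero.1 this with h | h
    · exact absurd h hwv
    · linarith [sub_eq_zero.1 h]
  have hsumf : ∑ v ∈ V.filter (fun v => f v = c), w v = 1 := by
    rw [Finset.sum_filter_of_ne (fun v hv hh => hkey v hv hh), hw1]
  have hsum2 : ∑ v ∈ V.filter (fun v => f v = c), w v • v = x := by
    rw [Finset.sum_filter_of_ne, hcm]
    intro v hv hh
    apply hkey v hv
    intro hw
    rw [hw, zero_smul] at hh
    exact hh rfl
  have := Finset.centerMass_mem_convexHull (V.filter (fun v => f v = c))
    (fun v hv => hw0 v (Finset.mem_filter.1 hv).1) (by rw [hsumf]; norm_num)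
    (fun v hv => Finset.mem_coe.2 hv)
  rw [Finset.centerMass_eq_of_sum_1 _ _ hsumf] at this
  rwa [hsum2] at this

lemma notvert_mem_interior {S A : Finset (ℝ × ℝ)} (hS : GenPos S) (hA : A ⊆ S)
    (h3 : 3 ≤ A.card) {p : ℝ × ℝ} (hp : p ∈ A) (hnv : p ∉ vertsF A) :
    p ∈ interior (convexHull ℝ (A : Set (ℝ × ℝ))) := by
  by_contra hni
  have hconv : Convex ℝ (convexHull ℝ (A : Set (ℝ × ℝ))) := convex_convexHull ℝ _
  have hspan : affineSpan ℝ (convexHull ℝ (A : Set (ℝ × ℝ))) = ⊤ := by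
    rw [affineSpan_convexHull]; exact affineSpan_top_of_genpos hS hA h3
  have hne : (interior (convexHull ℝ (A : Set (ℝ × ℝ)))).Nonempty :=
    (hconv.interior_nonempty_iff_affineSpan_eq_top).2 hspan
  obtain ⟨f, hf⟩ := geometric_hahn_banach_open_point (hconv.interior) isOpen_interior hni
  obtain ⟨a, ha⟩ := hne
  have hfa : f a < f p := hf a ha
  have hle : ∀ y ∈ convexHull ℝ (A : Set (ℝ × ℝ)), f y ≤ f p := by
    intro y hy
    by_contra hgt
    push_neg at hgt
    have hya : 0 < f y - f a := by linarith
    set t := (f y - f p) / (2 * (f y - f a)) with htdef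
    have ht0 : 0 < t := div_pos (by linarith) (by linarith)
    have ht1 : t ≤ 1 := by
      rw [htdef, div_le_one (by linarith)]
      linarith
    have hmem : (1 - t) • y + t • a ∈ interior (convexHull ℝ (A : Set (ℝ × ℝ))) :=
      hconv.combo_self_interior_mem_interior hy ha (by linarith) ht0 (by ring)
    have hlt := hf _ hmem
    rw [map_add, map_smul, map_smul, smul_eq_mul, smul_eq_mul] at hlt
    have hteq : t * (f y - f a) = (f y - f p) / 2 := by
      rw [htdef]; field_simp
    nlinarith
  have hfne : ∃ x, f x ≠ 0 := by
    refine ⟨p - a, ?_⟩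
    rw [map_sub]
    intro hz
    have : f a = f p := by linarith [sub_eq_zero.1 hz]
    linarith
  have hpV : p ∈ convexHull ℝ ((vertsF A : Set (ℝ × ℝ))) := by
    rw [convexHull_vertsF]; exact subset_convexHull ℝ _ hp
  have hleV : ∀ v ∈ vertsF A, f v ≤ f p := fun v hv =>
    hle v (subset_convexHull ℝ _ (vertsF_subset A hv))
  have hface := mem_convexHull_face hpV f hleV rfl
  set F := (vertsF A).filter (fun v => f v = f p) with hF
  by_cases hFcard : 1 < F.card
  · obtain ⟨v₁, hv₁, v₂, hv₂, hvne⟩ := Finset.one_lt_card.1 hFcard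
    have hv₁V : v₁ ∈ vertsF A := (Finset.mem_filter.1 hv₁).1
    have hv₂V : v₂ ∈ vertsF A := (Finset.mem_filter.1 hv₂).1
    have hpv₁ : p ≠ v₁ := fun h => hnv (h ▸ hv₁V)
    have hpv₂ : p ≠ v₂ := fun h => hnv (h ▸ hv₂V)
    have hcard3 : ({p, v₁, v₂} : Finset (ℝ × ℝ)).card = 3 :=
      Finset.card_eq_three.2 ⟨p, v₁, v₂, hpv₁, hpv₂, hvne, rfl⟩
    have hsubS : ({p, v₁, v₂} : Finset (ℝ × ℝ)) ⊆ S := by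
      intro x hx
      simp only [Finset.mem_insert, Finset.mem_singleton] at hx
      rcases hx with rfl | rfl | rfl
      · exact hA hp
      · exact hA (vertsF_subset A hv₁V)
      · exact hA (vertsF_subset A hv₂V)
    apply hS _ hsubS hcard3
    apply (collinear_line hfne (f p)).subset
    intro x hx
    simp only [Finset.coe_insert, Finset.coe_singleton, Set.mem_insert_iff,
      Set.mem_singleton_iff] at hx
    rcases hx with rfl | rfl | rfl
    · exact rfl
    · exact (Finset.mem_filter.1 hv₁).2
    · exact (Finset.mem_filter.1 hv₂).2
  · -- F has exactly one element
    have hFne : F.Nonempty := by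
      by_contra hemp
      rw [Finset.not_nonempty_iff_eq_empty] at hemp
      rw [hemp] at hface
      simp at hface
    have : F.card = 1 := by
      have := Finset.card_pos.2 hFne
      omega
    obtain ⟨v, hv⟩ := Finset.card_eq_one.1 this
    rw [hv] at hface
    simp only [Finset.coe_singleton, convexHull_singleton, Set.mem_singleton_iff] at hface
    apply hnv
    rw [hface]
    exact (Finset.mem_filter.1 (hv ▸ Finset.mem_singleton_self v : v ∈ F)).1

lemma card_vertsF {S A : Finset (ℝ × ℝ)} (hS : GenPos S) (hA : A ⊆ S)
    (h3 : 3 ≤ A.card) : 3 ≤ (vertsF A).card := by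
  by_contra hlt
  push_neg at hlt
  have hcolV : Collinear ℝ ((vertsF A : Set (ℝ × ℝ))) := by
    interval_cases h : (vertsF A).card
    · rw [Finset.card_eq_zero.1 h]; simp [collinear_empty]
    · obtain ⟨v, hv⟩ := Finset.card_eq_one.1 h
      rw [hv]; simp [collinear_singleton]
    · obtain ⟨v, w, hvw, hv⟩ := Finset.card_eq_two.1 h
      rw [hv]; simp [collinear_pair]
  have hcolA : Collinear ℝ (A : Set (ℝ × ℝ)) := by
    apply collinear_of_subset_affineSpan (t := (vertsF A : Set (ℝ × ℝ))) _ hcolV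
    intro x hx
    have : x ∈ convexHull ℝ ((vertsF A : Set (ℝ × ℝ))) := by
      rw [convexHull_vertsF]
      exact subset_convexHull ℝ _ hx
    exact convexHull_subset_affineSpan _ this
  obtain ⟨T, hTA, hT3⟩ := Finset.exists_subset_card_eq h3
  exact hS T (hTA.trans hA) hT3 (hcolA.subset (by exact_mod_cast coe_subset.2 hTA))

lemma vertsF_union {T B : Finset (ℝ × ℝ)} (hT : ConvexPos T) (hT3 : 3 ≤ T.card)
    (hB : ∀ b ∈ B, b ∈ interior (convexHull ℝ (T : Set (ℝ × ℝ)))) :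
    vertsF (T ∪ B) = T := by
  have hBT : ∀ b ∈ B, b ∉ T := fun b hb hbT =>
    vertex_notin_interior hT (by omega) hbT (hB b hb)
  ext p
  simp only [vertsF, Finset.mem_filter, Finset.mem_union]
  constructor
  · rintro ⟨hpu, hpc⟩
    rcases hpu with h | h
    · exact h
    · exfalso
      apply hpc
      have hTsub : (T : Set (ℝ × ℝ)) ⊆ ((T ∪ B : Finset (ℝ × ℝ)) : Set (ℝ × ℝ)) \ {p} := by
        intro x hx
        refine ⟨by simp only [Finset.coe_union, Set.mem_union]; exact Or.inl hx, ?_⟩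
        rintro rfl
        exact hBT x h hx
      exact convexHull_mono hTsub (interior_subset (hB p h))
  · intro hpT
    refine ⟨Or.inl hpT, ?_⟩
    have hext : p ∈ (convexHull ℝ (T : Set (ℝ × ℝ))).extremePoints ℝ :=
      extreme_of_vertex hpT (hT p hpT)
    have hconvdiff : Convex ℝ ((convexHull ℝ (T : Set (ℝ × ℝ))) \ {p}) :=
      ((convex_convexHull ℝ _).mem_extremePoints_iff_convex_diff.1 hext).2
    have hsub : ((T ∪ B : Finset (ℝ × ℝ)) : Set (ℝ × ℝ)) \ {p}
        ⊆ (convexHull ℝ (T : Set (ℝ × ℝ))) \ {p} := by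
      rintro x ⟨hx, hxp⟩
      rcases Finset.mem_union.1 (Finset.mem_coe.1 hx) with h | h
      · exact ⟨subset_convexHull ℝ _ h, hxp⟩
      · exact ⟨interior_subset (hB x h), hxp⟩
    intro hpc
    exact ((convexHull_min hsub hconvdiff) hpc).2 rfl

lemma f_expand (f : ℕ → ℕ → ℝ) (hf : ∀ k l : ℕ, f k (l + 1) = f (k + 1) l + f k l) :
    ∀ l k : ℕ, f k l = ∑ j ∈ range (l + 1), (l.choose j : ℝ) * f (k + j) 0 := by
  intro l
  induction l with
  | zero => intro k; simp
  | succ n ih =>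
    intro k
    rw [hf k n, ih (k + 1), ih k]
    rw [Finset.sum_range_succ' (fun j => ((n+1).choose j : ℝ) * f (k + j) 0)]
    simp only [Nat.choose_succ_succ, Nat.cast_add, Nat.choose_zero_right, Nat.cast_one, one_mul,
      add_mul]
    rw [Finset.sum_add_distrib]
    have h1 : ∑ i ∈ range (n + 1), ((n.choose (i+1) : ℝ)) * f (k + (i+1)) 0
        = ∑ i ∈ range (n + 1), ((n.choose (i+1) : ℝ)) * f (k + (i+1)) 0 := rfl
    have e1 : ∑ i ∈ range (n + 1), ((n.choose i : ℝ)) * f (k + (i+1)) 0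
        = ∑ j ∈ range (n + 1), (n.choose j : ℝ) * f (k + 1 + j) 0 := by
      apply Finset.sum_congr rfl
      intro j _
      rw [show k + (j + 1) = k + 1 + j by omega]
    have e2 : (∑ i ∈ range (n + 1), ((n.choose (i+1) : ℝ)) * f (k + (i+1)) 0)
          + f (k + 0) 0
        = ∑ j ∈ range (n + 1), (n.choose j : ℝ) * f (k + j) 0 := by
      rw [Finset.sum_range_succ' (fun j => ((n.choose j : ℝ)) * f (k + j) 0)]
      rw [Finset.sum_range_succ]
      simp [Nat.choose_succ_self]
    rw [add_assoc, e1, e2]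

noncomputable def Ipts (S T : Finset (ℝ × ℝ)) : Finset (ℝ × ℝ) :=
  S.filter (fun p => p ∈ interior (convexHull ℝ (T : Set (ℝ × ℝ))))

noncomputable def TT (S : Finset (ℝ × ℝ)) : Finset (Finset (ℝ × ℝ)) :=
  S.powerset.filter (fun T => 3 ≤ T.card ∧ ConvexPos T)

noncomputable def AA (S : Finset (ℝ × ℝ)) : Finset (Finset (ℝ × ℝ)) :=
  S.powerset.filter (fun A => 3 ≤ A.card)

lemma stepB (f : ℕ → ℕ → ℝ) (S : Finset (ℝ × ℝ)) :
    ∑ k ∈ Icc 3 S.card, ∑ l ∈ range (S.card + 1), f k l * X S k l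
      = ∑ T ∈ TT S, f T.card (Ipts S T).card := by
  have hmaps : ∀ T ∈ TT S, (T.card, (Ipts S T).card) ∈ Icc 3 S.card ×ˢ range (S.card + 1) := by
    intro T hT
    rw [Finset.mem_product, Finset.mem_Icc, Finset.mem_range]
    rw [TT, Finset.mem_filter, Finset.mem_powerset] at hT
    exact ⟨⟨hT.2.1, Finset.card_le_card hT.1⟩, Nat.lt_succ_of_le (Finset.card_filter_le _ _)⟩
  rw [← Finset.sum_fiberwise_of_maps_to hmaps (fun T => f T.card (Ipts S T).card)]
  rw [Finset.sum_product]
  apply Finset.sum_congr rfl; intro k hk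
  apply Finset.sum_congr rfl; intro l _
  have hk3 : 3 ≤ k := (Finset.mem_Icc.1 hk).1
  have hfib : (TT S).filter (fun T => (T.card, (Ipts S T).card) = (k, l))
      = (Finset.powersetCard k S).filter (fun T => ConvexPos T ∧
        (S.filter (fun p => p ∈ interior (convexHull ℝ (T : Set (ℝ × ℝ))))).card = l) := by
    ext T
    simp only [TT, Ipts, Finset.mem_filter, Finset.mem_powerset, Finset.mem_powersetCard,
      Prod.mk.injEq]
    constructor
    · rintro ⟨⟨hsub, _, hcp⟩, hck, hcl⟩
      exact ⟨⟨hsub, hck⟩, hcp, hcl⟩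
    · rintro ⟨⟨hsub, hck⟩, hcp, hcl⟩
      exact ⟨⟨hsub, hck ▸ hk3, hcp⟩, hck, hcl⟩
  have hconst : ∑ T ∈ (TT S).filter (fun T => (T.card, (Ipts S T).card) = (k, l)),
      f T.card (Ipts S T).card
      = ∑ _T ∈ (TT S).filter (fun T => (T.card, (Ipts S T).card) = (k, l)), f k l := by
    apply Finset.sum_congr rfl
    intro T hT
    have h := (Finset.mem_filter.1 hT).2
    rw [Prod.mk.injEq] at h
    rw [h.1, h.2]
  rw [hconst, Finset.sum_const, hfib, nsmul_eq_mul]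
  rw [mul_comm]
  rfl

lemma stepC (g : ℕ → ℝ) (S T : Finset (ℝ × ℝ)) :
    ∑ j ∈ range ((Ipts S T).card + 1), ((Ipts S T).card.choose j : ℝ) * g (T.card + j)
      = ∑ B ∈ (Ipts S T).powerset, g (T.card + B.card) := by
  rw [Finset.sum_powerset_apply_card (fun j => g (T.card + j))]
  apply Finset.sum_congr rfl
  intro j _
  rw [nsmul_eq_mul]

lemma stepD (g : ℕ → ℝ) (S : Finset (ℝ × ℝ)) (hS : GenPos S) :
    ∑ T ∈ TT S, ∑ B ∈ (Ipts S T).powerset, g (T.card + B.card)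
      = ∑ A ∈ AA S, g A.card := by
  rw [Finset.sum_sigma' (TT S) (fun T => (Ipts S T).powerset)
    (fun T B => g (T.card + B.card))]
  refine Finset.sum_nbij' (fun x => x.1 ∪ x.2) (fun A => ⟨vertsF A, A \ vertsF A⟩)
    ?_ ?_ ?_ ?_ ?_
  · rintro ⟨T, B⟩ hx
    rw [Finset.mem_sigma] at hx
    obtain ⟨hT, hB⟩ := hx
    rw [TT, Finset.mem_filter, Finset.mem_powerset] at hT
    rw [Finset.mem_powerset] at hB
    rw [AA, Finset.mem_filter, Finset.mem_powerset]
    constructor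
    · apply Finset.union_subset hT.1
      exact hB.trans (Finset.filter_subset _ _)
    · exact le_trans hT.2.1 (Finset.card_le_card Finset.subset_union_left)
  · intro A hA
    rw [AA, Finset.mem_filter, Finset.mem_powerset] at hA
    rw [Finset.mem_sigma]
    constructor
    · rw [TT, Finset.mem_filter, Finset.mem_powerset]
      exact ⟨(vertsF_subset A).trans hA.1, card_vertsF hS hA.1 hA.2, convexPos_vertsF A⟩
    · rw [Finset.mem_powerset]
      intro p hp
      rw [Finset.mem_sdiff] at hp
      rw [Ipts, Finset.mem_filter]
      refine ⟨hA.1 hp.1, ?_⟩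
      rw [convexHull_vertsF]
      exact notvert_mem_interior hS hA.1 hA.2 hp.1 hp.2
  · rintro ⟨T, B⟩ hx
    rw [Finset.mem_sigma] at hx
    obtain ⟨hT, hB⟩ := hx
    rw [TT, Finset.mem_filter, Finset.mem_powerset] at hT
    rw [Finset.mem_powerset] at hB
    have hBint : ∀ b ∈ B, b ∈ interior (convexHull ℝ (T : Set (ℝ × ℝ))) := by
      intro b hb
      have := hB hb
      rw [Ipts, Finset.mem_filter] at this
      exact this.2
    have hv : vertsF (T ∪ B) = T := vertsF_union hT.2.2 hT.2.1 hBint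
    have hdisj : Disjoint T B := by
      rw [Finset.disjoint_left]
      intro b hbT hbB
      exact vertex_notin_interior hT.2.2 (by have := hT.2.1; omega) hbT (hBint b hbB)
    simp only [hv]
    rw [Finset.union_sdiff_cancel_left hdisj]
  · intro A hA
    simp only
    exact Finset.union_sdiff_of_subset (vertsF_subset A)
  · rintro ⟨T, B⟩ hx
    rw [Finset.mem_sigma] at hx
    obtain ⟨hT, hB⟩ := hx
    rw [TT, Finset.mem_filter, Finset.mem_powerset] at hT
    rw [Finset.mem_powerset] at hB
    have hBint : ∀ b ∈ B, b ∈ interior (convexHull ℝ (T : Set (ℝ × ℝ))) := by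
      intro b hb
      have := hB hb
      rw [Ipts, Finset.mem_filter] at this
      exact this.2
    have hdisj : Disjoint T B := by
      rw [Finset.disjoint_left]
      intro b hbT hbB
      exact vertex_notin_interior hT.2.2 (by have := hT.2.1; omega) hbT (hBint b hbB)
    simp only
    rw [Finset.card_union_of_disjoint hdisj]

lemma stepE (g : ℕ → ℝ) (S : Finset (ℝ × ℝ)) :
    ∑ A ∈ AA S, g A.card = ∑ m ∈ Icc 3 S.card, (S.card.choose m : ℝ) * g m := by
  have hmaps : ∀ A ∈ AA S, A.card ∈ Icc 3 S.card := by
    intro A hA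
    rw [AA, Finset.mem_filter, Finset.mem_powerset] at hA
    rw [Finset.mem_Icc]
    exact ⟨hA.2, Finset.card_le_card hA.1⟩
  rw [← Finset.sum_fiberwise_of_maps_to hmaps (fun A => g A.card)]
  apply Finset.sum_congr rfl
  intro m hm
  have hm3 : 3 ≤ m := (Finset.mem_Icc.1 hm).1
  have hfib : (AA S).filter (fun A => A.card = m) = Finset.powersetCard m S := by
    ext A
    simp only [AA, Finset.mem_filter, Finset.mem_powerset, Finset.mem_powersetCard]
    constructor
    · rintro ⟨⟨h1, _⟩, h3⟩; exact ⟨h1, h3⟩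
    · rintro ⟨h1, h3⟩; exact ⟨⟨h1, h3 ▸ hm3⟩, h3⟩
  have hconst : ∑ A ∈ (AA S).filter (fun A => A.card = m), g A.card
      = ∑ _A ∈ (AA S).filter (fun A => A.card = m), g m := by
    apply Finset.sum_congr rfl
    intro A hA
    rw [(Finset.mem_filter.1 hA).2]
  rw [hconst, Finset.sum_const, hfib, Finset.card_powersetCard, nsmul_eq_mul]

lemma main_formula (f : ℕ → ℕ → ℝ)
    (hf : ∀ k l : ℕ, f k (l + 1) = f (k + 1) l + f k l)
    (S : Finset (ℝ × ℝ)) (hS : GenPos S) :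
    ∑ k ∈ Icc 3 S.card, ∑ l ∈ range (S.card + 1), f k l * X S k l
      = ∑ m ∈ Icc 3 S.card, (S.card.choose m : ℝ) * f m 0 := by
  rw [stepB]
  have h1 : ∀ T ∈ TT S, f T.card (Ipts S T).card
      = ∑ B ∈ (Ipts S T).powerset, f (T.card + B.card) 0 := by
    intro T _
    rw [f_expand f hf (Ipts S T).card T.card, stepC (fun m => f m 0) S T]
  rw [Finset.sum_congr rfl h1, stepD (fun m => f m 0) S hS, stepE (fun m => f m 0) S]

theorem stmt5 (f : ℕ → ℕ → ℝ)
    (hf : ∀ k l : ℕ, f k (l + 1) = f (k + 1) l + f k l)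
    (S₁ S₂ : Finset (ℝ × ℝ)) (h₁ : GenPos S₁) (h₂ : GenPos S₂)
    (hcard : S₁.card = S₂.card) :
    ∑ k ∈ Finset.Icc 3 S₁.card, ∑ l ∈ Finset.range (S₁.card + 1), f k l * X S₁ k l =
    ∑ k ∈ Finset.Icc 3 S₂.card, ∑ l ∈ Finset.range (S₂.card + 1), f k l * X S₂ k l := by
  rw [main_formula f hf S₁ h₁, main_formula f hf S₂ h₂, hcard]
end

section
/- For any set S of n ≥ 3 points in general position in the plane, Σ_{k=3}^{n} Σ_{ℓ=0}^{n−3} 2^ℓ · X_{k,ℓ}(S) = 2^n − n²/2 − n/2 − 1. -/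
open Finset
open scoped Classical

abbrev Pt := ℝ × ℝ

lemma le_of_forall_step {a d c : ℝ} (h : ∀ t : ℝ, 0 < t → t ≤ 1 → a + t * d < c) : a ≤ c := by
  by_contra h'
  push_neg at h'
  have hd : 0 < 1 + |d| := by positivity
  set t := min 1 ((a - c) / (1 + |d|)) with ht
  have ht0 : 0 < t := lt_min one_pos (div_pos (by linarith) hd)
  have ht1 : t ≤ 1 := min_le_left _ _
  have h2 := h t ht0 ht1
  have h3 : t * d ≥ -(t * |d|) := by
    have := neg_abs_le d
    nlinarith [abs_nonneg d]
  have h4 : t * |d| ≤ ((a - c) / (1 + |d|)) * |d| := by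
    apply mul_le_mul_of_nonneg_right (min_le_right _ _) (abs_nonneg d)
  have h5 : ((a - c) / (1 + |d|)) * |d| < a - c := by
    rw [div_mul_eq_mul_div, div_lt_iff₀ hd]
    nlinarith [abs_nonneg d, h']
  linarith

lemma interior_lt_of_le {s : Set Pt} {f : Pt →L[ℝ] ℝ} {c : ℝ}
    (hle : ∀ x ∈ s, f x ≤ c) {v : Pt} (hv : 0 < f v) {u : Pt} (hu : u ∈ interior s) :
    f u < c := by
  have hvne : v ≠ 0 := by rintro rfl; simp at hv
  obtain ⟨ε, hε, hball⟩ := Metric.mem_nhds_iff.1 (mem_interior_iff_mem_nhds.1 hu)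
  have hnv : 0 < ‖v‖ := norm_pos_iff.2 hvne
  set w := u + (ε / (2 * ‖v‖)) • v with hw
  have hwmem : w ∈ s := by
    apply hball
    have : dist w u = ε / (2 * ‖v‖) * ‖v‖ := by
      rw [hw]; simp [dist_eq_norm, norm_smul, abs_of_pos hε]
    rw [Metric.mem_ball, this]
    rw [div_mul_eq_mul_div, mul_comm (2:ℝ) ‖v‖, ← div_div, mul_div_assoc, div_self hnv.ne', mul_one]
    linarith
  have := hle w hwmem
  rw [hw, map_add, map_smul] at this
  have hpos : 0 < (ε / (2 * ‖v‖)) * f v := by positivity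
  simp only [smul_eq_mul] at this
  linarith


lemma face_mem {A : Finset Pt} {f : Pt →L[ℝ] ℝ} {c : ℝ} {p : Pt}
    (hle : ∀ x ∈ A, f x ≤ c) (hp : p ∈ convexHull ℝ (A : Set Pt)) (hc : f p = c) :
    p ∈ convexHull ℝ ((A.filter (fun x => f x = c)) : Set Pt) := by
  rw [Finset.convexHull_eq] at hp
  obtain ⟨w, hw0, hw1, hwp⟩ := hp
  have hfp : ∑ y ∈ A, w y * f y = c := by
    have : f (A.centerMass w id) = ∑ y ∈ A, w y * f y := by
      rw [A.centerMass_eq_of_sum_1 _ hw1, map_sum]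
      simp
    rw [hwp, hc] at this
    linarith [this]
  have hzero : ∑ y ∈ A, w y * (c - f y) = 0 := by
    simp only [mul_sub]
    rw [Finset.sum_sub_distrib, hfp, ← Finset.sum_mul, hw1, one_mul, sub_self]
  have hterm : ∀ y ∈ A, w y * (c - f y) = 0 := by
    intro y hy
    have := (Finset.sum_eq_zero_iff_of_nonneg (fun y hy => by
      have := hw0 y hy; have := hle y hy; nlinarith)).1 hzero
    exact this y hy
  set A' := A.filter (fun y => w y ≠ 0) with hA'
  have hsub : A' ⊆ A.filter (fun x => f x = c) := by
    intro y hy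
    rw [Finset.mem_filter] at hy ⊢
    refine ⟨hy.1, ?_⟩
    have := hterm y hy.1
    rcases mul_eq_zero.1 this with h | h
    · exact absurd h hy.2
    · linarith
  have hcm : A'.centerMass w id = p := by
    rw [hA', Finset.centerMass_filter_ne_zero, hwp]
  have hsum' : ∑ y ∈ A', w y = 1 := by
    rw [hA', Finset.sum_filter_ne_zero, hw1]
  rw [← hcm]
  exact A'.centerMass_mem_convexHull (fun i hi => hw0 i (Finset.mem_filter.1 hi).1)
    (by rw [hsum']; norm_num) (fun i hi => hsub hi)

lemma collinear_levelset (f : Pt →L[ℝ] ℝ) {v : Pt} (hv : f v ≠ 0) (c : ℝ) :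
    Collinear ℝ {x : Pt | f x = c} := by
  rw [collinear_iff_rank_le_one]
  have hker : vectorSpan ℝ {x : Pt | f x = c} ≤ LinearMap.ker (f : Pt →ₗ[ℝ] ℝ) := by
    rw [vectorSpan_def]
    rw [Submodule.span_le]
    rintro z ⟨x, hx, y, hy, rfl⟩
    simp only [Set.mem_setOf_eq] at hx hy
    simp [LinearMap.mem_ker, vsub_eq_sub, map_sub, hx, hy]
  have hrank : Module.rank ℝ (LinearMap.ker (f : Pt →ₗ[ℝ] ℝ)) ≤ 1 := by
    have hfr : Module.finrank ℝ (LinearMap.ker (f : Pt →ₗ[ℝ] ℝ)) ≤ 1 := by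
      have hrn := LinearMap.finrank_range_add_finrank_ker (f : Pt →ₗ[ℝ] ℝ)
      have hdim : Module.finrank ℝ Pt = 2 := by
        simp [Module.finrank_prod]
      have hrange : Module.finrank ℝ (LinearMap.range (f : Pt →ₗ[ℝ] ℝ)) = 1 := by
        have : LinearMap.range (f : Pt →ₗ[ℝ] ℝ) = ⊤ := by
          rw [LinearMap.range_eq_top]
          intro y
          refine ⟨(y / f v) • v, ?_⟩
          simp [div_mul_cancel₀, hv]
        rw [this]
        simp
      omega
    calc Module.rank ℝ (LinearMap.ker (f : Pt →ₗ[ℝ] ℝ))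
        = (Module.finrank ℝ (LinearMap.ker (f : Pt →ₗ[ℝ] ℝ)) : Cardinal) :=
          (Module.finrank_eq_rank ℝ _).symm
      _ ≤ 1 := by exact_mod_cast hfr
  exact le_trans (Submodule.rank_mono hker) hrank


lemma not_collinear_of_gp {A : Finset Pt} (hA : 3 ≤ A.card)
    (hgp : ∀ T ⊆ A, T.card = 3 → ¬ Collinear ℝ (T : Set Pt)) :
    ¬ Collinear ℝ (A : Set Pt) := by
  intro hcol
  obtain ⟨T, hT, hTcard⟩ := Finset.exists_subset_card_eq hA
  exact hgp T hT hTcard (hcol.subset (Finset.coe_subset.2 hT))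

lemma span_top_of_gp {A : Finset Pt} (hA : 3 ≤ A.card)
    (hgp : ∀ T ⊆ A, T.card = 3 → ¬ Collinear ℝ (T : Set Pt)) :
    affineSpan ℝ (A : Set Pt) = ⊤ := by
  by_contra h
  apply not_collinear_of_gp hA hgp
  rw [collinear_iff_rank_le_one]
  have hne : ((A : Set Pt)).Nonempty := by
    rw [Finset.coe_nonempty, ← Finset.card_pos]; omega
  have hdir : vectorSpan ℝ (A : Set Pt) ≠ ⊤ := by
    intro htop
    apply h
    have := (AffineSubspace.direction_eq_top_iff_of_nonempty
      (s := affineSpan ℝ (A : Set Pt)) (by simpa using hne.mono (subset_affineSpan ℝ _)))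
    rw [← this, direction_affineSpan, htop]
  have hfin : Module.finrank ℝ (vectorSpan ℝ (A : Set Pt)) ≤ 1 := by
    have hdim : Module.finrank ℝ Pt = 2 := by simp [Module.finrank_prod]
    have hlt : Module.finrank ℝ (vectorSpan ℝ (A : Set Pt)) < 2 := by
      rw [← hdim]
      exact Submodule.finrank_lt hdir
    omega
  calc Module.rank ℝ (vectorSpan ℝ (A : Set Pt))
      = (Module.finrank ℝ (vectorSpan ℝ (A : Set Pt)) : Cardinal) :=
        (Module.finrank_eq_rank ℝ _).symm
    _ ≤ 1 := by exact_mod_cast hfin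

lemma interior_hull_nonempty {A : Finset Pt} (hA : 3 ≤ A.card)
    (hgp : ∀ T ⊆ A, T.card = 3 → ¬ Collinear ℝ (T : Set Pt)) :
    (interior (convexHull ℝ (A : Set Pt))).Nonempty := by
  rw [interior_convexHull_nonempty_iff_affineSpan_eq_top]
  exact span_top_of_gp hA hgp


/-- points of a convex set are `≤ c` if all interior points are `< c`, provided interior
nonempty. -/
lemma hull_le_of_interior_lt {s : Set Pt} (hs : Convex ℝ s) {f : Pt →L[ℝ] ℝ} {c : ℝ}
    (hni : (interior s).Nonempty) (hlt : ∀ y ∈ interior s, f y < c) :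
    ∀ x ∈ s, f x ≤ c := by
  obtain ⟨x₀, hx₀⟩ := hni
  intro x hx
  apply le_of_forall_step (d := f x₀ - f x)
  intro t ht0 ht1
  have hmem := hs.add_smul_sub_mem_interior hx hx₀ ⟨ht0, ht1⟩
  have := hlt _ hmem
  rw [map_add, map_smul, map_sub] at this
  simpa [smul_eq_mul] using this

/-- Main geometric lemma: in a finite set with no 3 collinear points, a non-extreme point lies
in the interior of the convex hull. -/
lemma mem_interior_of_not_vertex {A : Finset Pt} (hA : 3 ≤ A.card)
    (hgp : ∀ T ⊆ A, T.card = 3 → ¬ Collinear ℝ (T : Set Pt)) {p : Pt} (hpA : p ∈ A)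
    (hp : p ∈ convexHull ℝ ((A : Set Pt) \ {p})) :
    p ∈ interior (convexHull ℝ (A : Set Pt)) := by
  by_contra hni
  have hniA := interior_hull_nonempty hA hgp
  obtain ⟨f, hf⟩ := geometric_hahn_banach_open_point
    ((convex_convexHull ℝ (A : Set Pt)).interior) isOpen_interior hni
  set c := f p with hc
  have hle : ∀ x ∈ convexHull ℝ (A : Set Pt), f x ≤ c :=
    hull_le_of_interior_lt (convex_convexHull ℝ _) hniA hf
  obtain ⟨x₀, hx₀⟩ := hniA
  have hvne : f (p - x₀) ≠ 0 := by
    have := hf x₀ hx₀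
    rw [map_sub]
    intro h
    have h2 : f p = f x₀ := sub_eq_zero.1 h
    rw [hc] at this
    linarith
  -- p is in the hull of (A.erase p), all of whose points satisfy f x ≤ c
  have hp' : p ∈ convexHull ℝ ((A.erase p : Finset Pt) : Set Pt) := by
    rwa [Finset.coe_erase]
  have hface := face_mem (A := A.erase p) (f := f) (c := c)
    (fun x hx => hle x (subset_convexHull ℝ _ (Finset.mem_coe.2 (Finset.mem_of_mem_erase hx))))
    hp' rfl
  set F := (A.erase p).filter (fun x => f x = c) with hF
  have hFcard : F.card ≤ 1 := by
    by_contra hcard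
    push_neg at hcard
    obtain ⟨a, ha, b, hb, hab⟩ := Finset.one_lt_card.1 hcard
    have haA : a ∈ A := Finset.mem_of_mem_erase (Finset.mem_filter.1 ha).1
    have hbA : b ∈ A := Finset.mem_of_mem_erase (Finset.mem_filter.1 hb).1
    have hap : a ≠ p := Finset.ne_of_mem_erase (Finset.mem_filter.1 ha).1
    have hbp : b ≠ p := Finset.ne_of_mem_erase (Finset.mem_filter.1 hb).1
    have hT : ({p, a, b} : Finset Pt) ⊆ A := by
      intro x hx
      simp only [Finset.mem_insert, Finset.mem_singleton] at hx
      rcases hx with rfl | rfl | rfl <;> assumption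
    have hTcard : ({p, a, b} : Finset Pt).card = 3 := by
      rw [Finset.card_insert_of_notMem (by simp [hap.symm, hbp.symm]),
        Finset.card_insert_of_notMem (by simp [hab]), Finset.card_singleton]
    apply hgp _ hT hTcard
    apply (collinear_levelset f hvne c).subset
    intro x hx
    simp only [Finset.coe_insert, Set.mem_insert_iff, Finset.coe_singleton,
      Set.mem_singleton_iff] at hx
    rcases hx with rfl | rfl | rfl
    · exact hc.symm
    · exact (Finset.mem_filter.1 ha).2
    · exact (Finset.mem_filter.1 hb).2
  -- F has ≤ 1 element, but p ∈ hull F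
  rcases Finset.card_le_one_iff_subset_singleton.1 hFcard with ⟨a, haF⟩
  have : p ∈ convexHull ℝ (({a} : Finset Pt) : Set Pt) :=
    convexHull_mono (by exact_mod_cast haF) hface
  simp only [Finset.coe_singleton, convexHull_singleton, Set.mem_singleton_iff] at this
  have hpa : p = a := this
  have hFne : F.Nonempty := by
    rcases Finset.eq_empty_or_nonempty F with h | h
    · rw [h] at hface; simp at hface
    · exact h
  obtain ⟨x, hxF⟩ := hFne
  have hx_eq : x = a := Finset.mem_singleton.1 (haF hxF)
  have hxp : x ≠ p := Finset.ne_of_mem_erase (Finset.mem_filter.1 hxF).1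
  exact hxp (hx_eq.trans hpa.symm)


/-- Separation of a vertex from the rest. -/
lemma vertex_sep {T : Finset Pt} {t : Pt} (ht : t ∈ T) (hne : (T.erase t).Nonempty)
    (hev : t ∉ convexHull ℝ ((T.erase t : Finset Pt) : Set Pt)) :
    ∃ f : Pt →L[ℝ] ℝ, (∀ x ∈ convexHull ℝ ((T.erase t : Finset Pt) : Set Pt), f x < f t) ∧
      (∀ x ∈ interior (convexHull ℝ (T : Set Pt)), f x < f t) := by
  obtain ⟨f, u, hfu, hut⟩ := geometric_hahn_banach_closed_point
    (convex_convexHull ℝ _) ((T.erase t).finite_toSet.isClosed_convexHull ℝ) hev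
  refine ⟨f, fun x hx => lt_trans (hfu x hx) hut, ?_⟩
  -- first: f ≤ f t on the hull of T
  have hle : ∀ x ∈ convexHull ℝ (T : Set Pt), f x ≤ f t := by
    apply convexHull_min _ (convex_halfSpace_le (LinearMap.isLinear (f : Pt →ₗ[ℝ] ℝ)) (f t))
    intro x hx
    rcases eq_or_ne x t with rfl | hxt
    · simp only [Set.mem_setOf_eq]; exact le_refl _
    · exact le_of_lt (lt_trans (hfu x (subset_convexHull ℝ _
        (Finset.mem_coe.2 (Finset.mem_erase.2 ⟨hxt, hx⟩)))) hut)
  obtain ⟨x₀, hx₀⟩ := hne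
  have hfv : 0 < f (t - x₀) := by
    rw [map_sub, sub_pos]
    exact lt_trans (hfu x₀ (subset_convexHull ℝ _ (Finset.mem_coe.2 hx₀))) hut
  intro x hx
  exact interior_lt_of_le hle hfv hx

lemma vertex_not_interior {T : Finset Pt} {t : Pt} (ht : t ∈ T) (hne : (T.erase t).Nonempty)
    (hev : t ∉ convexHull ℝ ((T.erase t : Finset Pt) : Set Pt)) :
    t ∉ interior (convexHull ℝ (T : Set Pt)) := by
  obtain ⟨f, _, h2⟩ := vertex_sep ht hne hev
  intro hti
  exact lt_irrefl _ (h2 t hti)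

lemma vertex_not_in_hull_union {T : Finset Pt} {t : Pt} (ht : t ∈ T) (hne : (T.erase t).Nonempty)
    (hev : t ∉ convexHull ℝ ((T.erase t : Finset Pt) : Set Pt))
    {U : Set Pt} (hU : U ⊆ interior (convexHull ℝ (T : Set Pt))) :
    t ∉ convexHull ℝ (((T : Set Pt) \ {t}) ∪ U) := by
  obtain ⟨f, h1, h2⟩ := vertex_sep ht hne hev
  intro htmem
  have hsub : ((T : Set Pt) \ {t}) ∪ U ⊆ {x : Pt | f x < f t} := by
    rintro x (hx | hx)
    · exact h1 x (subset_convexHull ℝ _ (by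
        rw [Finset.coe_erase]; exact hx))
    · exact h2 x (hU hx)
  have h3 : t ∈ {x : Pt | f x < f t} :=
    convexHull_min hsub (convex_halfSpace_lt (LinearMap.isLinear (f : Pt →ₗ[ℝ] ℝ)) (f t)) htmem
  simp only [Set.mem_setOf_eq] at h3
  exact lt_irrefl _ h3


noncomputable def Vs (A : Finset Pt) : Finset Pt :=
  A.filter (fun p => p ∉ convexHull ℝ ((A : Set Pt) \ {p}))

lemma Vs_subset (A : Finset Pt) : Vs A ⊆ A := Finset.filter_subset _ _

lemma hull_Vs (A : Finset Pt) : convexHull ℝ ((Vs A : Finset Pt) : Set Pt)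
    = convexHull ℝ (A : Set Pt) := by
  apply le_antisymm (convexHull_mono (by exact_mod_cast Vs_subset A))
  have hcomp : IsCompact (convexHull ℝ (A : Set Pt)) := A.finite_toSet.isCompact_convexHull ℝ
  have hKM := closure_convexHull_extremePoints hcomp (convex_convexHull ℝ _)
  have hext : (convexHull ℝ (A : Set Pt)).extremePoints ℝ ⊆ (Vs A : Set Pt) := by
    intro x hx
    have hxA : x ∈ (A : Set Pt) := extremePoints_convexHull_subset hx
    rw [(convex_convexHull ℝ (A : Set Pt)).mem_extremePoints_iff_convex_diff] at hx
    simp only [Vs, Finset.coe_filter, Set.mem_setOf_eq]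
    refine ⟨hxA, fun hmem => ?_⟩
    have hsub : (A : Set Pt) \ {x} ⊆ convexHull ℝ (A : Set Pt) \ {x} :=
      Set.diff_subset_diff_left (subset_convexHull ℝ _)
    have := convexHull_min hsub hx.2 hmem
    exact this.2 rfl
  calc convexHull ℝ (A : Set Pt)
      = closure (convexHull ℝ ((convexHull ℝ (A : Set Pt)).extremePoints ℝ)) := hKM.symm
    _ ⊆ closure (convexHull ℝ ((Vs A : Finset Pt) : Set Pt)) :=
        closure_mono (convexHull_mono hext)
    _ = convexHull ℝ ((Vs A : Finset Pt) : Set Pt) :=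
        IsClosed.closure_eq ((Vs A).finite_toSet.isClosed_convexHull ℝ)

lemma convexPos_Vs (A : Finset Pt) : ConvexPos (Vs A) := by
  intro p hp
  have hp' := (Finset.mem_filter.1 hp).2
  intro hmem
  apply hp'
  exact convexHull_mono (Set.diff_subset_diff_left (by exact_mod_cast Vs_subset A)) hmem

lemma collinear_hull {s : Set Pt} (h : Collinear ℝ s) : Collinear ℝ (convexHull ℝ s) := by
  rw [collinear_iff_rank_le_one] at h ⊢
  have : vectorSpan ℝ (convexHull ℝ s) = vectorSpan ℝ s := by
    rw [← direction_affineSpan, ← direction_affineSpan ℝ s, affineSpan_convexHull]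
  rw [this]
  exact h

lemma Vs_card {A : Finset Pt} (hA : 3 ≤ A.card)
    (hgp : ∀ T ⊆ A, T.card = 3 → ¬ Collinear ℝ (T : Set Pt)) :
    3 ≤ (Vs A).card := by
  by_contra h
  push_neg at h
  have hcol : Collinear ℝ ((Vs A : Finset Pt) : Set Pt) := by
    interval_cases hc : (Vs A).card
    · rw [Finset.card_eq_zero.1 hc]; simpa using collinear_empty ℝ Pt
    · obtain ⟨a, ha⟩ := Finset.card_eq_one.1 hc
      rw [ha]; simpa using collinear_singleton ℝ a
    · obtain ⟨a, b, _, hab⟩ := Finset.card_eq_two.1 hc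
      rw [hab]; simpa using collinear_pair ℝ a b
  have hcolA : Collinear ℝ (A : Set Pt) := by
    have h1 : (A : Set Pt) ⊆ convexHull ℝ ((Vs A : Finset Pt) : Set Pt) := by
      rw [hull_Vs]; exact subset_convexHull ℝ _
    exact (collinear_hull hcol).subset h1
  obtain ⟨T, hT, hTc⟩ := Finset.exists_subset_card_eq hA
  exact hgp T hT hTc (hcolA.subset (by exact_mod_cast hT))


lemma erase_nonempty_of_card {T : Finset Pt} {t : Pt} (hT : 3 ≤ T.card) :
    (T.erase t).Nonempty := by
  rw [← Finset.card_pos]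
  have := Finset.card_erase_le (s := T) (a := t)
  have := Finset.pred_card_le_card_erase (s := T) (a := t)
  omega

lemma hev_of_convexPos {T : Finset Pt} {t : Pt} (hcp : ConvexPos T) (ht : t ∈ T) :
    t ∉ convexHull ℝ ((T.erase t : Finset Pt) : Set Pt) := by
  rw [Finset.coe_erase]; exact hcp t ht

lemma vertex_not_interior' {T : Finset Pt} {t : Pt} (hcp : ConvexPos T) (hT : 3 ≤ T.card)
    (ht : t ∈ T) : t ∉ interior (convexHull ℝ (T : Set Pt)) :=
  vertex_not_interior ht (erase_nonempty_of_card hT) (hev_of_convexPos hcp ht)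

lemma disj_TB {T B : Finset Pt} (hcp : ConvexPos T) (hT : 3 ≤ T.card)
    (hB : (B : Set Pt) ⊆ interior (convexHull ℝ (T : Set Pt))) : Disjoint T B := by
  rw [Finset.disjoint_left]
  intro t ht htB
  exact vertex_not_interior' hcp hT ht (hB htB)

lemma Vs_union {T B : Finset Pt} (hcp : ConvexPos T) (hT : 3 ≤ T.card)
    (hB : (B : Set Pt) ⊆ interior (convexHull ℝ (T : Set Pt))) : Vs (T ∪ B) = T := by
  have hdisj := disj_TB hcp hT hB
  ext p
  simp only [Vs, Finset.mem_filter, Finset.mem_union]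
  constructor
  · rintro ⟨hp | hp, hnmem⟩
    · exact hp
    · exfalso
      apply hnmem
      have hpT : p ∉ T := Finset.disjoint_right.1 hdisj hp
      have hsub : (T : Set Pt) ⊆ ((T ∪ B : Finset Pt) : Set Pt) \ {p} := by
        intro x hx
        refine ⟨by simp [Finset.mem_coe.1 hx], ?_⟩
        rintro rfl
        exact hpT hx
      exact convexHull_mono hsub (interior_subset (hB hp))
  · intro htT
    refine ⟨Or.inl htT, ?_⟩
    have hsub : ((T ∪ B : Finset Pt) : Set Pt) \ {p} ⊆ ((T : Set Pt) \ {p}) ∪ (B : Set Pt) := by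
      rintro x ⟨hx, hxp⟩
      rw [Finset.coe_union] at hx
      rcases hx with hx | hx
      · exact Or.inl ⟨hx, hxp⟩
      · exact Or.inr hx
    intro hmem
    exact vertex_not_in_hull_union htT (erase_nonempty_of_card hT)
      (hev_of_convexPos hcp htT) hB (convexHull_mono hsub hmem)


noncomputable def IT (S T : Finset Pt) : Finset Pt :=
  S.filter (fun p => p ∈ interior (convexHull ℝ (T : Set Pt)))

noncomputable def Polys (S : Finset Pt) : Finset (Finset Pt) :=
  S.powerset.filter (fun T => 3 ≤ T.card ∧ ConvexPos T)

lemma IT_subset_sdiff {S : Finset Pt} {T : Finset Pt} (hcp : ConvexPos T) (hT : 3 ≤ T.card) :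
    IT S T ⊆ S \ T := by
  intro p hp
  rw [Finset.mem_sdiff]
  rw [IT, Finset.mem_filter] at hp
  exact ⟨hp.1, fun hpT => vertex_not_interior' hcp hT hpT hp.2⟩

lemma NB_mem_interior {S : Finset Pt} {B T : Finset Pt} (hB : B ⊆ IT S T) :
    (B : Set Pt) ⊆ interior (convexHull ℝ (T : Set Pt)) := by
  intro b hb
  have := hB (Finset.mem_coe.1 hb)
  rw [IT, Finset.mem_filter] at this
  exact this.2

lemma main_bij {S : Finset Pt} (hgp : GenPos S) :
    ∑ T ∈ Polys S, 2 ^ (IT S T).card = (S.powerset.filter (fun A => 3 ≤ A.card)).card := by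
  have : ∑ T ∈ Polys S, 2 ^ (IT S T).card
      = ∑ T ∈ Polys S, ((IT S T).powerset.card) := by
    apply Finset.sum_congr rfl
    intro T _
    rw [Finset.card_powerset]
  rw [this, ← Finset.card_sigma]
  apply Finset.card_bij (fun x _ => x.1 ∪ x.2)
  · rintro ⟨T, B⟩ hx
    rw [Finset.mem_sigma] at hx
    obtain ⟨hT, hBp⟩ := hx
    rw [Polys, Finset.mem_filter, Finset.mem_powerset] at hT
    rw [Finset.mem_powerset] at hBp
    rw [Finset.mem_filter, Finset.mem_powerset]
    constructor
    · apply Finset.union_subset hT.1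
      exact hBp.trans (Finset.filter_subset _ _)
    · calc 3 ≤ T.card := hT.2.1
        _ ≤ (T ∪ B).card := Finset.card_le_card Finset.subset_union_left
  · rintro ⟨T, B⟩ hx ⟨T', B'⟩ hx' heq
    rw [Finset.mem_sigma, Polys, Finset.mem_filter, Finset.mem_powerset,
      Finset.mem_powerset] at hx hx'
    have hBi := NB_mem_interior (S := S) hx.2
    have hBi' := NB_mem_interior (S := S) hx'.2
    have hT : Vs (T ∪ B) = T := Vs_union hx.1.2.2 hx.1.2.1 hBi
    have hT' : Vs (T' ∪ B') = T' := Vs_union hx'.1.2.2 hx'.1.2.1 hBi'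
    have hTT : T = T' := by rw [← hT, ← hT', heq]
    have hBB : B = B' := by
      have h1 : (T ∪ B) \ T = B :=
        Finset.union_sdiff_cancel_left (disj_TB hx.1.2.2 hx.1.2.1 hBi)
      have h2 : (T' ∪ B') \ T' = B' :=
        Finset.union_sdiff_cancel_left (disj_TB hx'.1.2.2 hx'.1.2.1 hBi')
      rw [← h1, ← h2, heq, hTT]
    subst hTT; subst hBB; rfl
  · intro A hA
    rw [Finset.mem_filter, Finset.mem_powerset] at hA
    obtain ⟨hAS, hA3⟩ := hA
    have hgpA : ∀ U ⊆ A, U.card = 3 → ¬ Collinear ℝ (U : Set Pt) :=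
      fun U hU => hgp U (hU.trans hAS)
    refine ⟨⟨Vs A, A \ Vs A⟩, ?_, ?_⟩
    · rw [Finset.mem_sigma, Polys, Finset.mem_filter, Finset.mem_powerset, Finset.mem_powerset]
      refine ⟨⟨(Vs_subset A).trans hAS, Vs_card hA3 hgpA, convexPos_Vs A⟩, ?_⟩
      intro b hb
      rw [Finset.mem_sdiff] at hb
      rw [IT, Finset.mem_filter]
      refine ⟨hAS hb.1, ?_⟩
      rw [hull_Vs]
      apply mem_interior_of_not_vertex hA3 hgpA hb.1
      have := hb.2
      rw [Vs, Finset.mem_filter] at this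
      push_neg at this
      exact this hb.1
    · exact Finset.union_sdiff_of_subset (Vs_subset A)



lemma regroup {S : Finset Pt} (hn : 3 ≤ S.card) :
    ∑ k ∈ Finset.Icc 3 S.card, ∑ l ∈ Finset.range (S.card - 2), 2 ^ l * X S k l
      = ∑ T ∈ Polys S, 2 ^ (IT S T).card := by
  have inner : ∀ k ∈ Finset.Icc 3 S.card,
      ∑ l ∈ Finset.range (S.card - 2), 2 ^ l * X S k l
        = ∑ T ∈ (Finset.powersetCard k S).filter (fun T => ConvexPos T), 2 ^ (IT S T).card := by
    intro k hk
    rw [Finset.mem_Icc] at hk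
    rw [← Finset.sum_fiberwise_of_maps_to (g := fun T => (IT S T).card)
      (t := Finset.range (S.card - 2)) ?_ (fun T => 2 ^ (IT S T).card)]
    · apply Finset.sum_congr rfl
      intro l _
      have hXeq : ((Finset.powersetCard k S).filter (fun T => ConvexPos T)).filter
          (fun T => (IT S T).card = l)
          = (Finset.powersetCard k S).filter (fun T => ConvexPos T ∧ (IT S T).card = l) := by
        rw [Finset.filter_filter]
      have hconst : ∀ T ∈ ((Finset.powersetCard k S).filter (fun T => ConvexPos T)).filter
          (fun T => (IT S T).card = l), 2 ^ (IT S T).card = 2 ^ l :=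
        fun T hT => by rw [(Finset.mem_filter.1 hT).2]
      rw [Finset.sum_congr rfl hconst, Finset.sum_const, hXeq, X]
      simp [IT, mul_comm, smul_eq_mul]
      congr 1
    · intro T hT
      rw [Finset.mem_filter, Finset.mem_powersetCard] at hT
      have hsub := IT_subset_sdiff (S := S) hT.2 (hT.1.2 ▸ hk.1)
      have hle := Finset.card_le_card hsub
      rw [Finset.card_sdiff_of_subset hT.1.1, hT.1.2] at hle
      have hk1 := hk.1
      have hk2 := hk.2
      show (IT S T).card ∈ Finset.range (S.card - 2)
      rw [Finset.mem_range]
      omega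
  rw [Finset.sum_congr rfl inner]
  rw [← Finset.sum_fiberwise_of_maps_to (g := fun T : Finset Pt => T.card)
    (t := Finset.Icc 3 S.card) ?_ (fun T => 2 ^ (IT S T).card)]
  · apply Finset.sum_congr rfl
    intro k hk
    rw [Finset.mem_Icc] at hk
    apply Finset.sum_congr _ (fun _ _ => rfl)
    ext T
    simp only [Polys, Finset.mem_filter, Finset.mem_powersetCard, Finset.mem_powerset]
    have h3 := hk.1
    constructor
    · rintro ⟨⟨hTS, hck⟩, hcp⟩
      exact ⟨⟨hTS, hck ▸ h3, hcp⟩, hck⟩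
    · rintro ⟨⟨hTS, _, hcp⟩, hck⟩
      exact ⟨⟨hTS, hck⟩, hcp⟩
  · intro T hT
    rw [Polys, Finset.mem_filter, Finset.mem_powerset] at hT
    rw [Finset.mem_Icc]
    exact ⟨hT.2.1, Finset.card_le_card hT.1⟩

lemma count_small (S : Finset Pt) :
    (S.powerset.filter (fun A => 3 ≤ A.card)).card + (1 + S.card + S.card.choose 2)
      = 2 ^ S.card := by
  have h1 := Finset.card_filter_add_card_filter_not
    (s := S.powerset) (p := fun A => 3 ≤ A.card)
  rw [Finset.card_powerset] at h1
  have h2 : S.powerset.filter (fun A => ¬ 3 ≤ A.card)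
      = (Finset.range 3).biUnion (fun k => Finset.powersetCard k S) := by
    ext A
    simp only [Finset.mem_filter, Finset.mem_powerset, Finset.mem_biUnion, Finset.mem_range,
      Finset.mem_powersetCard, not_le]
    constructor
    · rintro ⟨hA, hc⟩; exact ⟨A.card, hc, hA, rfl⟩
    · rintro ⟨k, hk, hA, rfl⟩; exact ⟨hA, hk⟩
  have h3 : ((Finset.range 3).biUnion (fun k => Finset.powersetCard k S)).card
      = ∑ k ∈ Finset.range 3, (Finset.powersetCard k S).card := by
    apply Finset.card_biUnion
    intro i _ j _ hij
    rw [Function.onFun, Finset.disjoint_left]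
    intro A hAi hAj
    rw [Finset.mem_powersetCard] at hAi hAj
    exact hij (hAi.2 ▸ hAj.2 ▸ rfl)
  rw [h2, h3] at h1
  simp only [Finset.card_powersetCard] at h1
  rw [Finset.sum_range_succ, Finset.sum_range_succ, Finset.sum_range_one] at h1
  simp only [Nat.choose_zero_right, Nat.choose_one_right] at h1
  omega


theorem stmt6 (S : Finset (ℝ × ℝ)) (hgp : GenPos S) (hn : 3 ≤ S.card) :
    ∑ k ∈ Finset.Icc 3 S.card, ∑ l ∈ Finset.range (S.card - 2),
      (2 : ℝ) ^ l * X S k l =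
    2 ^ S.card - (S.card : ℝ) ^ 2 / 2 - (S.card : ℝ) / 2 - 1 := by
  have hN := main_bij (S := S) hgp
  have hR := regroup (S := S) hn
  have hC := count_small S
  have hcast : (∑ k ∈ Finset.Icc 3 S.card, ∑ l ∈ Finset.range (S.card - 2),
      (2 : ℝ) ^ l * X S k l)
      = ((∑ k ∈ Finset.Icc 3 S.card, ∑ l ∈ Finset.range (S.card - 2),
        2 ^ l * X S k l : ℕ) : ℝ) := by
    push_cast
    rfl
  rw [hcast, hR, hN]
  have hC' : ((S.powerset.filter (fun A => 3 ≤ A.card)).card : ℝ)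
      + (1 + S.card + (S.card.choose 2 : ℝ)) = 2 ^ S.card := by
    exact_mod_cast congrArg (fun m : ℕ => (m : ℝ)) hC
  have hch : (S.card.choose 2 : ℝ) = S.card * (S.card - 1) / 2 := Nat.cast_choose_two ℝ S.card
  rw [hch] at hC'
  have : ((S.powerset.filter (fun A => 3 ≤ A.card)).card : ℝ)
      = 2 ^ S.card - (S.card : ℝ) ^ 2 / 2 - (S.card : ℝ) / 2 - 1 := by
    nlinarith [hC']
  rw [this]
end
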